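/- Let R be an integral domain with fraction field K, let D ≥ 2 and 1 ≤ k ≤ D−1, and let Λ be a primitive k-lattice in R^D with K-span V_Λ. Let π: K^D → K^D/V_Λ be the canonical projection and let Λ^π = π(R^D) be the factor lattice. Then: (a) Λ^π is a free R-module of rank D−k whose K-span is all of K^D/V_Λ; and (b) the canonical K-linear isomorphism Θ: K^D/V_Λ → ((V_Λ)^⊥)*, induced by x ↦ (ℓ ↦ ℓ(x)), maps Λ^π onto the dual lattice (Λ^⊥)* = {φ ∈ ((V_Λ)^⊥)* : φ(ℓ) ∈ R for all ℓ ∈ Λ^⊥}. -/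

import Mathlib

noncomputable section

/-- The coordinatewise embedding of `R^D` into `K^D`. -/
def piAlgebraMap (R K : Type*) [CommRing R] [CommRing K] [Algebra R K] (D : ℕ) :
    (Fin D → R) →ₗ[R] (Fin D → K) :=
  LinearMap.pi fun i => (Algebra.linearMap R K).comp (LinearMap.proj i)

/-- The standard lattice `R^{D,*}` in the dual space `(K^D)*`: the `R`-span of the dual
basis of the canonical basis, i.e. of the coordinate forms. -/
def dualStdLattice (R K : Type*) [CommRing R] [Field K] [Algebra R K] (D : ℕ) :
    Submodule R (Module.Dual K (Fin D → K)) :=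
  Submodule.span R (Set.range fun i : Fin D => (LinearMap.proj i : (Fin D → K) →ₗ[K] K))

/-- The canonical `K`-linear map `Θ : K^D ⧸ V_Λ → ((V_Λ)^⊥)*` induced by
`x ↦ (ℓ ↦ ℓ(x))`. -/
def factorTheta (K : Type*) [Field K] (D : ℕ) (VΛ : Submodule K (Fin D → K)) :
    ((Fin D → K) ⧸ VΛ) →ₗ[K] Module.Dual K ↥(VΛ.dualAnnihilator) :=
  VΛ.liftQ ((VΛ.dualAnnihilator).subtype.dualMap.comp (Module.Dual.eval K (Fin D → K)))
    (by
      intro x hx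
      rw [LinearMap.mem_ker]
      ext ⟨ℓ, hℓ⟩
      simpa using ((Submodule.mem_dualAnnihilator _).mp hℓ x hx))

/-- The dual lattice `(Λ^⊥)* ⊆ ((V_Λ)^⊥)*` of the orthogonal lattice
`Λ^⊥ = (V_Λ)^⊥ ∩ R^{D,*}`: the functionals on `(V_Λ)^⊥` taking `R`-integral values on
all elements of `(V_Λ)^⊥` lying in `R^{D,*}`. -/
def dualOfOrthogonalLattice (R K : Type*) [CommRing R] [Field K] [Algebra R K] (D : ℕ)
    (VΛ : Submodule K (Fin D → K)) :
    Submodule R (Module.Dual K ↥(VΛ.dualAnnihilator)) where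
  carrier := {ψ | ∀ ℓ : Module.Dual K (Fin D → K), ∀ hℓ : ℓ ∈ VΛ.dualAnnihilator,
    ℓ ∈ dualStdLattice R K D → ∃ r : R, ψ ⟨ℓ, hℓ⟩ = algebraMap R K r}
  add_mem' := by
    intro a b ha hb ℓ hℓ hℓ'
    obtain ⟨r, hr⟩ := ha ℓ hℓ hℓ'
    obtain ⟨s, hs⟩ := hb ℓ hℓ hℓ'
    exact ⟨r + s, by simp [hr, hs]⟩
  zero_mem' := fun ℓ hℓ hℓ' => ⟨0, by simp⟩
  smul_mem' := by
    intro c ψ hψ ℓ hℓ hℓ'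
    obtain ⟨r, hr⟩ := hψ ℓ hℓ hℓ'
    exact ⟨c * r, by simp [hr, Algebra.smul_def]⟩

open nonZeroDivisors in
lemma isLocalizedModule_piAlgebraMap (R K : Type*) [CommRing R] [IsDomain R] [Field K]
    [Algebra R K] [IsFractionRing R K] (D : ℕ) :
    IsLocalizedModule R⁰ (piAlgebraMap R K D) where
  map_units s := by
    rw [Module.End.isUnit_iff]
    have hs : algebraMap R K (s : R) ≠ 0 :=
      (IsFractionRing.to_map_eq_zero_iff (K := K)).not.mpr (nonZeroDivisors.coe_ne_zero s)
    constructor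
    · intro x y h
      simp only [Module.algebraMap_end_apply, ← algebraMap_smul K (s : R)] at h
      exact smul_right_injective _ hs h
    · intro y
      refine ⟨(algebraMap R K (s : R))⁻¹ • y, ?_⟩
      simp only [Module.algebraMap_end_apply, ← algebraMap_smul K (s : R), smul_smul,
        mul_inv_cancel₀ hs, one_smul]
  surj y := by
    obtain ⟨s, hs⟩ := IsLocalization.exist_integer_multiples_of_finite R⁰ y
    choose x hx using hs
    refine ⟨(x, s), ?_⟩
    funext i
    have := hx i
    simpa [piAlgebraMap, Submonoid.smul_def] using (hx i).symm
  exists_of_eq {x₁ x₂} h := by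
    refine ⟨1, ?_⟩
    have : x₁ = x₂ := by
      funext i
      exact IsFractionRing.injective R K (congrFun h i)
    rw [this]
/-- index embeddings -/
def adaptIdx1 {D k : ℕ} (hadd : k + (D - k) = D) (i : Fin k) : Fin D :=
  (finSumFinEquiv.trans (finCongr hadd)) (Sum.inl i)

def adaptIdx2 {D k : ℕ} (hadd : k + (D - k) = D) (j : Fin (D - k)) : Fin D :=
  (finSumFinEquiv.trans (finCongr hadd)) (Sum.inr j)

lemma adaptIdx_ne {D k : ℕ} (hadd : k + (D - k) = D) (i : Fin k) (j : Fin (D - k)) :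
    adaptIdx1 hadd i ≠ adaptIdx2 hadd j := fun h =>
  Sum.inl_ne_inr ((finSumFinEquiv.trans (finCongr hadd)).injective h)

lemma adaptIdx2_injective {D k : ℕ} (hadd : k + (D - k) = D) :
    Function.Injective (adaptIdx2 hadd) := fun a b h => by
  have := (finSumFinEquiv.trans (finCongr hadd)).injective h
  exact Sum.inr_injective this

lemma adaptIdx_cases {D k : ℕ} (hadd : k + (D - k) = D) (i : Fin D) :
    (∃ i', adaptIdx1 hadd i' = i) ∨ (∃ j, adaptIdx2 hadd j = i) := by
  obtain ⟨s, hs⟩ := (finSumFinEquiv.trans (finCongr hadd)).surjective i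
  cases s with
  | inl i' => exact Or.inl ⟨i', hs⟩
  | inr j => exact Or.inr ⟨j, hs⟩

lemma exists_adapted_basis (R : Type*) [CommRing R] [IsDomain R] (D k : ℕ)
    (hadd : k + (D - k) = D) (Λ : Submodule R (Fin D → R))
    (hfree : Module.Free R Λ) (hrank : Module.rank R Λ = k)
    (hqfree : Module.Free R ((Fin D → R) ⧸ Λ))
    (hqrank : Module.rank R ((Fin D → R) ⧸ Λ) = (D - k : ℕ)) :
    ∃ b : Module.Basis (Fin D) R (Fin D → R),
      Λ = Submodule.span R (Set.range fun i : Fin k => b (adaptIdx1 hadd i)) := by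
  classical
  -- a section of the quotient map
  obtain ⟨s, hs⟩ := Module.projective_lifting_property Λ.mkQ LinearMap.id Λ.mkQ_surjective
  have hs' : ∀ q, Λ.mkQ (s q) = q := fun q => DFunLike.congr_fun hs q
  have hsi : Function.Injective s := Function.LeftInverse.injective hs'
  -- projection onto Λ
  have hmem : ∀ x : Fin D → R, x - s (Λ.mkQ x) ∈ Λ := by
    intro x
    have : Λ.mkQ (x - s (Λ.mkQ x)) = 0 := by
      simp [map_sub, hs']
    simpa [← Submodule.Quotient.mk_eq_zero, Submodule.mkQ_apply] using this
  set retr : (Fin D → R) →ₗ[R] Λ :=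
    (LinearMap.id - s.comp Λ.mkQ).codRestrict Λ hmem with hretr_def
  have hretr : ∀ x : Λ, retr x = x := by
    intro x
    apply Subtype.ext
    have hx0 : Λ.mkQ (x : Fin D → R) = 0 := by
      simpa [Submodule.mkQ_apply, Submodule.Quotient.mk_eq_zero] using x.2
    simp [hretr_def, LinearMap.codRestrict_apply, hx0]
  have hcompl : IsCompl Λ (LinearMap.ker retr) := LinearMap.isCompl_of_proj hretr
  have hker : LinearMap.ker retr = LinearMap.range s := by
    ext x
    constructor
    · intro hx
      have : x - s (Λ.mkQ x) = 0 := by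
        have := congrArg (Subtype.val) (LinearMap.mem_ker.mp hx)
        simpa [hretr_def, LinearMap.codRestrict_apply] using this
      exact ⟨Λ.mkQ x, by linear_combination (norm := module) -this⟩
    · rintro ⟨q, rfl⟩
      rw [LinearMap.mem_ker]
      apply Subtype.ext
      simp [hretr_def, LinearMap.codRestrict_apply, hs']
  -- bases
  have bΛ0 := hfree.chooseBasis
  have bQ0 := hqfree.chooseBasis
  have hcΛ : Cardinal.mk (Module.Free.ChooseBasisIndex R Λ) = (k : Cardinal) := by
    rw [← Module.Free.rank_eq_card_chooseBasisIndex, hrank]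
  have hcQ : Cardinal.mk (Module.Free.ChooseBasisIndex R ((Fin D → R) ⧸ Λ))
      = ((D - k : ℕ) : Cardinal) := by
    rw [← Module.Free.rank_eq_card_chooseBasisIndex, hqrank]
  have hcardΛ : Nonempty (Module.Free.ChooseBasisIndex R Λ ≃ Fin k) :=
    Cardinal.lift_mk_eq'.mp (by rw [hcΛ, Cardinal.mk_fin]; simp)
  have hcardQ : Nonempty (Module.Free.ChooseBasisIndex R ((Fin D → R) ⧸ Λ) ≃ Fin (D - k)) :=
    Cardinal.lift_mk_eq'.mp (by rw [hcQ, Cardinal.mk_fin]; simp)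
  obtain ⟨eΛ⟩ := hcardΛ
  obtain ⟨eQ⟩ := hcardQ
  set bΛ : Module.Basis (Fin k) R Λ := bΛ0.reindex eΛ
  set bC : Module.Basis (Fin (D - k)) R (LinearMap.ker retr) :=
    (bQ0.reindex eQ).map ((LinearEquiv.ofInjective s hsi).trans (LinearEquiv.ofEq _ _ hker.symm))
  set b : Module.Basis (Fin D) R (Fin D → R) :=
    ((bΛ.prod bC).map (Submodule.prodEquivOfIsCompl Λ (LinearMap.ker retr) hcompl)).reindex
      (finSumFinEquiv.trans (finCongr hadd))
  refine ⟨b, ?_⟩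
  have hb1 : ∀ i : Fin k, b (adaptIdx1 hadd i) = (bΛ i : Fin D → R) := by
    intro i
    simp only [b, adaptIdx1, Module.Basis.reindex_apply, Equiv.symm_apply_apply, Module.Basis.map_apply,
      Module.Basis.prod_apply]
    simp [Submodule.coe_prodEquivOfIsCompl]
  have : (Set.range fun i : Fin k => b (adaptIdx1 hadd i)) =
      Λ.subtype '' (Set.range bΛ) := by
    ext x
    simp only [Set.mem_range, Set.mem_image]
    constructor
    · rintro ⟨i, rfl⟩; exact ⟨bΛ i, ⟨i, rfl⟩, (hb1 i).symm⟩
    · rintro ⟨v, ⟨i, rfl⟩, rfl⟩; exact ⟨i, hb1 i⟩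
  rw [this, ← Submodule.map_span, bΛ.span_eq, Submodule.map_subtype_top]

set_option maxHeartbeats 1000000 in
open nonZeroDivisors in
/-- Let `Λ` be a primitive `k`-lattice in `R^D`, `R` a domain with fraction field `K`,
with `K`-span `V_Λ`, and let `π : K^D → K^D ⧸ V_Λ` be the canonical projection. Then
(a) the factor lattice `Λ^π = π(R^D)` is a free `R`-module of rank `D - k` whose `K`-span
is all of `K^D ⧸ V_Λ`; and (b) the canonical map `Θ : K^D ⧸ V_Λ → ((V_Λ)^⊥)*` maps `Λ^π`
onto the dual lattice `(Λ^⊥)*` of the orthogonal lattice `Λ^⊥ = (V_Λ)^⊥ ∩ R^{D,*}`. -/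
theorem factor_lattice_free_and_maps_to_dual_of_orthogonal
    (R K : Type*) [CommRing R] [IsDomain R] [Field K] [Algebra R K] [IsFractionRing R K]
    (D k : ℕ) (hD : 2 ≤ D) (hk : 1 ≤ k) (hkD : k ≤ D - 1)
    (Λ : Submodule R (Fin D → R))
    (hfree : Module.Free R Λ) (hrank : Module.rank R Λ = k)
    (hqfree : Module.Free R ((Fin D → R) ⧸ Λ))
    (hqrank : Module.rank R ((Fin D → R) ⧸ Λ) = D - k) :
    letI VΛ : Submodule K (Fin D → K) :=
      Submodule.span K (⇑(piAlgebraMap R K D) '' (Λ : Set (Fin D → R)))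
    letI factorLattice : Submodule R ((Fin D → K) ⧸ VΛ) :=
      Submodule.map (VΛ.mkQ.restrictScalars R) (LinearMap.range (piAlgebraMap R K D))
    -- (a)
    (Module.Free R factorLattice ∧ Module.rank R factorLattice = D - k ∧
      Submodule.span K (factorLattice : Set ((Fin D → K) ⧸ VΛ)) = ⊤) ∧
    -- (b)
    Submodule.map ((factorTheta K D VΛ).restrictScalars R) factorLattice =
      dualOfOrthogonalLattice R K D VΛ := by
  classical
  have hkD' : k ≤ D := le_trans hkD (Nat.sub_le D 1)
  have hadd : k + (D - k) = D := Nat.add_sub_cancel' hkD'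
  obtain ⟨b, hb⟩ := exists_adapted_basis R D k hadd Λ hfree hrank hqfree hqrank
  haveI : IsLocalizedModule R⁰ (piAlgebraMap R K D) := isLocalizedModule_piAlgebraMap R K D
  set VΛ : Submodule K (Fin D → K) :=
    Submodule.span K (⇑(piAlgebraMap R K D) '' (Λ : Set (Fin D → R))) with hVdef
  set factorLattice : Submodule R ((Fin D → K) ⧸ VΛ) :=
    Submodule.map (VΛ.mkQ.restrictScalars R) (LinearMap.range (piAlgebraMap R K D)) with hFdef
  set bK : Module.Basis (Fin D) K (Fin D → K) := b.ofIsLocalizedModule K R⁰ (piAlgebraMap R K D)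
    with hbKdef
  have hbK : ∀ i, bK i = piAlgebraMap R K D (b i) :=
    fun i => b.ofIsLocalizedModule_apply K R⁰ (piAlgebraMap R K D) i
  -- characterization of VΛ
  have hVΛ : VΛ = Submodule.span K (Set.range fun i : Fin k => bK (adaptIdx1 hadd i)) := by
    apply le_antisymm
    · rw [hVdef, Submodule.span_le]
      rintro z ⟨x, hx, rfl⟩
      rw [hb] at hx
      induction hx using Submodule.span_induction with
      | mem v hv =>
        obtain ⟨i, rfl⟩ := hv
        exact Submodule.subset_span ⟨i, by simpa using hbK _⟩
      | zero => simp
      | add a c ha hc iha ihc => rw [map_add]; exact Submodule.add_mem _ iha ihc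
      | smul r a ha iha =>
        rw [map_smul, ← algebraMap_smul K r (piAlgebraMap R K D a)]
        exact Submodule.smul_mem _ _ iha
    · rw [Submodule.span_le]
      rintro z ⟨i, rfl⟩
      show bK (adaptIdx1 hadd i) ∈ (VΛ : Set (Fin D → K))
      rw [hbK]
      exact Submodule.subset_span ⟨b (adaptIdx1 hadd i), hb ▸ Submodule.subset_span ⟨i, rfl⟩, rfl⟩
  -- the quotient basis
  set w : Fin (D - k) → ((Fin D → K) ⧸ VΛ) :=
    fun j => Submodule.Quotient.mk (bK (adaptIdx2 hadd j)) with hwdef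
  have hw_li : LinearIndependent K w := by
    rw [Fintype.linearIndependent_iff]
    intro g hg j
    have hy : (∑ j', g j' • bK (adaptIdx2 hadd j')) ∈ VΛ := by
      rw [← Submodule.Quotient.mk_eq_zero]
      have : (Submodule.Quotient.mk (∑ j', g j' • bK (adaptIdx2 hadd j')) :
          (Fin D → K) ⧸ VΛ) = ∑ j', g j' • w j' := by
        rw [hwdef, ← Submodule.mkQ_apply, map_sum]
        simp [Submodule.mkQ_apply]
      rw [this, hg]
    have h1 : bK.repr (∑ j', g j' • bK (adaptIdx2 hadd j')) (adaptIdx2 hadd j) = g j := by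
      simp only [map_sum, map_smul, Module.Basis.repr_self, Finsupp.coe_finset_sum, Finset.sum_apply,
        Finsupp.smul_apply, Finsupp.single_apply, (adaptIdx2_injective hadd).eq_iff,
        smul_eq_mul, mul_ite, mul_one, mul_zero]
      simp
    have h2 : bK.repr (∑ j', g j' • bK (adaptIdx2 hadd j')) (adaptIdx2 hadd j) = 0 := by
      rw [hVΛ] at hy
      have : (Set.range fun i : Fin k => bK (adaptIdx1 hadd i)) =
          ⇑bK '' (Set.range (adaptIdx1 hadd)) := by
        rw [← Set.range_comp]; rfl
      rw [this] at hy
      have hsupp := (Module.Basis.mem_span_image bK).mp hy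
      by_contra h0
      have : adaptIdx2 hadd j ∈ Set.range (adaptIdx1 hadd) :=
        hsupp (by simpa [Finsupp.mem_support_iff] using h0)
      obtain ⟨i, hi⟩ := this
      exact adaptIdx_ne hadd i j hi
    rw [h1] at h2
    exact h2
  have hw_span : ⊤ ≤ Submodule.span K (Set.range w) := by
    intro x _
    obtain ⟨y, rfl⟩ := VΛ.mkQ_surjective x
    rw [← bK.sum_repr y, map_sum]
    apply Submodule.sum_mem
    intro i _
    rw [map_smul]
    apply Submodule.smul_mem
    rcases adaptIdx_cases hadd i with ⟨i', rfl⟩ | ⟨j, rfl⟩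
    · have : bK (adaptIdx1 hadd i') ∈ VΛ := hVΛ ▸ Submodule.subset_span ⟨i', rfl⟩
      have : VΛ.mkQ (bK (adaptIdx1 hadd i')) = 0 := by
        simpa [Submodule.mkQ_apply, Submodule.Quotient.mk_eq_zero] using this
      rw [this]
      exact Submodule.zero_mem _
    · exact Submodule.subset_span ⟨j, by simp [hwdef, Submodule.mkQ_apply]⟩
  set bQK : Module.Basis (Fin (D - k)) K ((Fin D → K) ⧸ VΛ) := Module.Basis.mk hw_li hw_span with hbQKdef
  -- factor lattice = R-span of w
  have hFL : factorLattice = Submodule.span R (Set.range w) := by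
    have hrange : LinearMap.range (piAlgebraMap R K D) =
        Submodule.span R (Set.range ⇑bK) :=
      (b.ofIsLocalizedModule_span K R⁰ (piAlgebraMap R K D)).symm
    rw [hFdef, hrange, Submodule.map_span]
    apply le_antisymm
    · rw [Submodule.span_le]
      rintro z ⟨v, ⟨i, rfl⟩, rfl⟩
      rcases adaptIdx_cases hadd i with ⟨i', rfl⟩ | ⟨j, rfl⟩
      · have hmem : bK (adaptIdx1 hadd i') ∈ VΛ := hVΛ ▸ Submodule.subset_span ⟨i', rfl⟩
        have : (VΛ.mkQ.restrictScalars R) (bK (adaptIdx1 hadd i')) = 0 := by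
          simpa [Submodule.mkQ_apply, Submodule.Quotient.mk_eq_zero] using hmem
        rw [this]
        exact Submodule.zero_mem _
      · exact Submodule.subset_span ⟨j, by simp [hwdef, Submodule.mkQ_apply]⟩
    · rw [Submodule.span_le]
      rintro z ⟨j, rfl⟩
      exact Submodule.subset_span ⟨bK (adaptIdx2 hadd j), ⟨adaptIdx2 hadd j, rfl⟩,
        by simp [hwdef, Submodule.mkQ_apply]⟩
  -- linear independence over R
  have hw_liR : LinearIndependent R w := by
    apply hw_li.restrict_scalars
    intro r r' h
    have : algebraMap R K r = algebraMap R K r' := by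
      simpa [Algebra.smul_def] using h
    exact IsFractionRing.injective R K this
  have hfree_fl : Module.Free R factorLattice := by
    rw [hFL]
    exact Module.Free.of_basis (Module.Basis.span hw_liR)
  have hrank_fl : Module.rank R factorLattice = (D - k : ℕ) := by
    rw [hFL, rank_eq_card_basis (Module.Basis.span hw_liR), Fintype.card_fin]
  have hspan_fl : Submodule.span K (factorLattice : Set ((Fin D → K) ⧸ VΛ)) = ⊤ := by
    apply le_antisymm le_top
    rw [← bQK.span_eq]
    apply Submodule.span_le.mpr
    rintro z ⟨j, rfl⟩
    apply Submodule.subset_span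
    have : bQK j = w j := by rw [hbQKdef, Module.Basis.mk_apply]
    rw [this, hFL]
    exact Submodule.subset_span ⟨j, rfl⟩
  refine ⟨⟨hfree_fl, hrank_fl, hspan_fl⟩, ?_⟩
  -- part (b)
  have hTheta : ∀ (x : Fin D → K) (ℓ : Module.Dual K (Fin D → K))
      (hℓ : ℓ ∈ VΛ.dualAnnihilator),
      factorTheta K D VΛ (Submodule.Quotient.mk x) ⟨ℓ, hℓ⟩ = ℓ x := by
    intro x ℓ hℓ
    rfl
  -- integrality of dualStdLattice elements on integral points
  have hstdval : ∀ ℓ' ∈ dualStdLattice R K D, ∀ y : Fin D → R,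
      ∃ r : R, ℓ' (piAlgebraMap R K D y) = algebraMap R K r := by
    intro ℓ' hℓ'
    induction hℓ' using Submodule.span_induction with
    | mem v hv =>
      obtain ⟨i, rfl⟩ := hv
      exact fun y => ⟨y i, rfl⟩
    | zero => exact fun y => ⟨0, by simp⟩
    | add a c ha hc iha ihc =>
      intro y
      obtain ⟨r, hr⟩ := iha y
      obtain ⟨r', hr'⟩ := ihc y
      exact ⟨r + r', by simp [hr, hr']⟩
    | smul c a ha iha =>
      intro y
      obtain ⟨r, hr⟩ := iha y
      exact ⟨c * r, by simp [hr, Algebra.smul_def]⟩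
  -- the distinguished annihilator functionals
  have hcoord_ann : ∀ j, bK.coord (adaptIdx2 hadd j) ∈ VΛ.dualAnnihilator := by
    intro j
    rw [Submodule.mem_dualAnnihilator]
    intro x hx
    rw [hVΛ] at hx
    induction hx using Submodule.span_induction with
    | mem v hv =>
      obtain ⟨i, rfl⟩ := hv
      have : bK.coord (adaptIdx2 hadd j) (bK (adaptIdx1 hadd i)) = 0 := by
        simp [Module.Basis.coord_apply, Module.Basis.repr_self,
          Finsupp.single_apply_eq_zero, (adaptIdx_ne hadd i j).symm]
      simpa using this
    | zero => simp
    | add a c ha hc iha ihc => rw [map_add, iha, ihc, add_zero]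
    | smul c a ha iha => rw [map_smul, iha, smul_zero]
  have hcoord_std : ∀ i, bK.coord i ∈ dualStdLattice R K D := by
    intro i
    have hid := Module.Basis.sum_dual_apply_smul_coord (Pi.basisFun K (Fin D)) (bK.coord i)
    rw [← hid]
    apply Submodule.sum_mem
    intro m _
    have h1 : (Pi.basisFun K (Fin D)).coord m =
        (LinearMap.proj m : (Fin D → K) →ₗ[K] K) := by
      ext x
      simp [Module.Basis.coord_apply, Pi.basisFun_repr]
    have hsingle : (Pi.basisFun K (Fin D)) m = piAlgebraMap R K D (Pi.single m 1) := by
      funext j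
      simp [Pi.basisFun_apply, piAlgebraMap, Pi.single_apply, apply_ite (algebraMap R K)]
    have h2 : bK.coord i ((Pi.basisFun K (Fin D)) m) =
        algebraMap R K (b.repr (Pi.single m (1 : R)) i) := by
      rw [hsingle, Module.Basis.coord_apply, hbKdef, Module.Basis.ofIsLocalizedModule_repr_apply]
    rw [h1, h2, algebraMap_smul]
    exact Submodule.smul_mem _ _ (Submodule.subset_span ⟨m, rfl⟩)
  apply le_antisymm
  · rintro ψ ⟨q, hq, rfl⟩
    rw [hFdef] at hq
    obtain ⟨z, ⟨y, rfl⟩, rfl⟩ := hq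
    intro ℓ hℓ hstd
    obtain ⟨r, hr⟩ := hstdval ℓ hstd y
    exact ⟨r, by rw [← hr]; exact hTheta (piAlgebraMap R K D y) ℓ hℓ⟩
  · intro ψ hψ
    have hψ' : ∀ ℓ : Module.Dual K (Fin D → K), ∀ hℓ : ℓ ∈ VΛ.dualAnnihilator,
        ℓ ∈ dualStdLattice R K D → ∃ r : R, ψ ⟨ℓ, hℓ⟩ = algebraMap R K r := hψ
    choose r hr using fun j => hψ' (bK.coord (adaptIdx2 hadd j)) (hcoord_ann j) (hcoord_std (adaptIdx2 hadd j))
    set y : Fin D → R := ∑ j, r j • b (adaptIdx2 hadd j) with hydef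
    refine ⟨(VΛ.mkQ.restrictScalars R) (piAlgebraMap R K D y), ?_, ?_⟩
    · rw [hFdef]
      exact Submodule.mem_map_of_mem ⟨y, rfl⟩
    · have hx : piAlgebraMap R K D y = ∑ j, algebraMap R K (r j) • bK (adaptIdx2 hadd j) := by
        rw [hydef, map_sum]
        refine Finset.sum_congr rfl fun j _ => ?_
        rw [map_smul, algebraMap_smul, hbK]
      apply LinearMap.ext
      rintro ⟨ℓ, hℓ⟩
      have hval : ((factorTheta K D VΛ).restrictScalars R)
          ((VΛ.mkQ.restrictScalars R) (piAlgebraMap R K D y)) ⟨ℓ, hℓ⟩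
          = ℓ (piAlgebraMap R K D y) := hTheta (piAlgebraMap R K D y) ℓ hℓ
      refine hval.trans ?_
      have hzero : ∀ i' : Fin k, ℓ (bK (adaptIdx1 hadd i')) = 0 := fun i' =>
        ((Submodule.mem_dualAnnihilator ℓ).mp hℓ) _ (hVΛ ▸ Submodule.subset_span ⟨i', rfl⟩)
      have hsplit : ℓ = ∑ j, ℓ (bK (adaptIdx2 hadd j)) • bK.coord (adaptIdx2 hadd j) := by
        conv_lhs => rw [← Module.Basis.sum_dual_apply_smul_coord bK ℓ]
        rw [← Equiv.sum_comp (finSumFinEquiv.trans (finCongr hadd))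
          (fun i => ℓ (bK i) • bK.coord i), Fintype.sum_sum_type]
        have h0 : (∑ i' : Fin k, ℓ (bK ((finSumFinEquiv.trans (finCongr hadd)) (Sum.inl i'))) •
            bK.coord ((finSumFinEquiv.trans (finCongr hadd)) (Sum.inl i'))) = 0 := by
          apply Finset.sum_eq_zero
          intro i' _
          rw [show ((finSumFinEquiv.trans (finCongr hadd)) (Sum.inl i'))
            = adaptIdx1 hadd i' from rfl, hzero, zero_smul]
        rw [h0, zero_add]
        rfl
      have hLsub : (⟨ℓ, hℓ⟩ : VΛ.dualAnnihilator) =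
          ∑ j, ℓ (bK (adaptIdx2 hadd j)) •
            (⟨bK.coord (adaptIdx2 hadd j), hcoord_ann j⟩ : VΛ.dualAnnihilator) := by
        apply Subtype.ext
        simp only [AddSubmonoidClass.coe_finset_sum, SetLike.val_smul]
        exact hsplit
      rw [hx, map_sum, hLsub, map_sum]
      simp only [map_smul, smul_eq_mul, hr]
      exact Finset.sum_congr rfl fun j _ => mul_comm _ _
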